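/- Let G be a connected graph on n vertices with minimum cut size t, let t̂ ≤ t, ε ∈ (0,1), and let H be the random subgraph keeping each edge independently with probability p = min{200·(log n)/(ε²·t̂), 1}. Then with probability at least 1 − n^{−10}, every cut of G of size k has size within (1 ± ε)·p·k in H, simultaneously for all cuts. -/

import Mathlib

open Finset
open scoped Classical

/-- Edges of `G` crossing the partition `(A, Aᶜ)`. -/
noncomputable def cutEdges {V : Type*} [Fintype V] [DecidableEq V]
    (G : SimpleGraph V) (A : Finset V) : Finset (Sym2 V) :=
  G.edgeFinset.filter (fun e => ∃ u ∈ A, ∃ v ∈ Aᶜ, e = s(u, v))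

section aux

lemma log_ge_aux {x : ℝ} (hx : 0 ≤ x) : 2*x/(2+x) ≤ Real.log (1+x) := by
  have key : MonotoneOn (fun x : ℝ => Real.log (1+x) - 2*x/(2+x)) (Set.Ici 0) := by
    apply monotoneOn_of_deriv_nonneg (convex_Ici 0)
    · apply ContinuousOn.sub
      · exact (continuousOn_const.add continuousOn_id).log (by intro y hy; simp at hy; show (1:ℝ) + y ≠ 0; positivity)
      · exact ContinuousOn.div (continuousOn_const.mul continuousOn_id)
          (continuousOn_const.add continuousOn_id) (by intro y hy; simp at hy; positivity)
    · intro y hy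
      rw [interior_Ici] at hy
      simp only [Set.mem_Ioi] at hy
      apply DifferentiableAt.differentiableWithinAt
      have h1 : (1:ℝ) + y ≠ 0 := by positivity
      have h2 : (2:ℝ) + y ≠ 0 := by positivity
      fun_prop (disch := assumption)
    · intro y hy
      rw [interior_Ici] at hy
      simp only [Set.mem_Ioi] at hy
      have h1 : HasDerivAt (fun x : ℝ => Real.log (1+x)) (1/(1+y)) y := by
        have := ((hasDerivAt_id y).const_add (1:ℝ)).log (by positivity)
        simpa using this
      have h2 : HasDerivAt (fun x : ℝ => 2*x/(2+x)) ((2*1*(2+y) - 2*y*1)/(2+y)^2) y := by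
        have := (((hasDerivAt_id y).const_mul (2:ℝ)).div ((hasDerivAt_id y).const_add (2:ℝ))
          (by positivity))
        exact this
      have := (h1.sub h2).deriv
      rw [show (fun x : ℝ => Real.log (1+x) - 2*x/(2+x)) = ((fun x : ℝ => Real.log (1+x)) - fun x : ℝ => 2*x/(2+x)) from rfl, this]
      rw [div_sub_div _ _ (by positivity : (1:ℝ)+y ≠ 0) (by positivity : ((2:ℝ)+y)^2 ≠ 0)]
      apply div_nonneg _ (by positivity)
      nlinarith
  have := key (Set.mem_Ici.2 le_rfl) (Set.mem_Ici.2 hx) hx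
  simp at this
  linarith

lemma log_lower_aux {x : ℝ} (hx0 : 0 ≤ x) (hx1 : x < 1) :
    0 ≤ (1-x) * Real.log (1-x) + x - x^2/2 := by
  have key : MonotoneOn (fun x : ℝ => (1-x) * Real.log (1-x) + x - x^2/2) (Set.Ico 0 1) := by
    apply monotoneOn_of_deriv_nonneg (convex_Ico 0 1)
    · apply ContinuousOn.sub
      apply ContinuousOn.add
      · apply ContinuousOn.mul (continuousOn_const.sub continuousOn_id)
        exact (continuousOn_const.sub continuousOn_id).log
          (by intro y hy; simp only [Set.mem_Ico] at hy; show (1:ℝ) - y ≠ 0; intro h; linarith [hy.2])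
      · exact continuousOn_id
      · exact (continuousOn_id.pow 2).div_const 2
    · intro y hy
      rw [interior_Ico] at hy
      obtain ⟨hy0, hy1⟩ := hy
      apply DifferentiableAt.differentiableWithinAt
      have h1 : (1:ℝ) - y ≠ 0 := by intro h; nlinarith
      fun_prop (disch := assumption)
    · intro y hy
      rw [interior_Ico] at hy
      obtain ⟨hy0, hy1⟩ := hy
      have h1 : (0:ℝ) < 1 - y := by linarith
      have hd : HasDerivAt (fun x : ℝ => (1-x) * Real.log (1-x) + x - x^2/2)
          ((-1) * Real.log (1-y) + (1-y) * (-1/(1-y)) + 1 - 2*y/2) y := by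
        have hlog : HasDerivAt (fun x : ℝ => Real.log (1-x)) (-1/(1-y)) y := by
          have := ((hasDerivAt_id y).const_sub (1:ℝ)).log (by positivity)
          simpa using this
        have hmul := (((hasDerivAt_id y).const_sub (1:ℝ)).mul hlog)
        have hsq : HasDerivAt (fun x : ℝ => x^2/2) (2*y/2) y := by
          simpa using (hasDerivAt_pow 2 y).div_const 2
        have := (hmul.add (hasDerivAt_id y)).sub hsq
        exact this
      rw [hd.deriv]
      have hle : Real.log (1-y) ≤ (1-y) - 1 := Real.log_le_sub_one_of_pos h1
      have heq : (1-y) * (-1/(1-y)) = -1 := by field_simp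
      rw [heq]
      linarith
  have := key (Set.mem_Ico.2 ⟨le_rfl, by norm_num⟩) (Set.mem_Ico.2 ⟨hx0, hx1⟩) hx0
  simpa using this

lemma mgf_tail (k : ℕ) (p c a : ℝ) (hp0 : 0 ≤ p) (hp1 : p ≤ 1) (P : ℕ → Prop) [DecidablePred P]
    (hP : ∀ j, P j → 0 ≤ c * ((j:ℝ) - a)) :
    ∑ j ∈ range (k+1), (if P j then (k.choose j : ℝ) * p^j * (1-p)^(k-j) else 0)
      ≤ Real.exp (-(c*a)) * (p * Real.exp c + (1-p))^k := by
  have hq : (0:ℝ) ≤ 1 - p := by linarith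
  have step1 : ∀ j ∈ range (k+1),
      (if P j then (k.choose j : ℝ) * p^j * (1-p)^(k-j) else 0)
        ≤ (k.choose j : ℝ) * p^j * (1-p)^(k-j) * Real.exp (c * ((j:ℝ) - a)) := by
    intro j _
    have hterm : (0:ℝ) ≤ (k.choose j : ℝ) * p^j * (1-p)^(k-j) := by positivity
    by_cases h : P j
    · simp only [h, if_true]
      nlinarith [Real.one_le_exp (hP j h), hterm]
    · simp only [h, if_false]
      positivity
  refine le_trans (Finset.sum_le_sum step1) ?_
  have expand : ∀ j : ℕ, (k.choose j : ℝ) * p^j * (1-p)^(k-j) * Real.exp (c * ((j:ℝ) - a))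
      = Real.exp (-(c*a)) * ((p * Real.exp c)^j * (1-p)^(k-j) * (k.choose j : ℝ)) := by
    intro j
    have h1 : c * ((j:ℝ) - a) = c * j + -(c*a) := by ring
    rw [h1, Real.exp_add]
    have h2 : Real.exp (c * (j:ℝ)) = (Real.exp c)^j := by
      rw [← Real.exp_nat_mul]; ring_nf
    rw [h2, mul_pow]
    ring
  simp only [expand]
  rw [← Finset.mul_sum]
  have := (add_pow (p * Real.exp c) (1-p) k).symm
  rw [this]

lemma chernoff (k : ℕ) (p ε : ℝ) (hp0 : 0 < p) (hp1 : p ≤ 1) (hε0 : 0 < ε) (hε1 : ε < 1) :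
    ∑ j ∈ range (k+1), (if |(j:ℝ) - p*k| ≤ ε*(p*k) then 0 else (k.choose j : ℝ) * p^j * (1-p)^(k-j))
    ≤ 2 * Real.exp (-(ε^2*p*k)/3) := by
  set q := 1 - p with hq
  have hpk : (0:ℝ) ≤ p * k := by positivity
  have hterm : ∀ j : ℕ, (0:ℝ) ≤ (k.choose j : ℝ) * p^j * (1-p)^(k-j) := by
    intro j; have : (0:ℝ) ≤ 1 - p := by linarith
    positivity
  -- pointwise split into two tails
  have split : ∀ j ∈ range (k+1),
      (if |(j:ℝ) - p*k| ≤ ε*(p*k) then 0 else (k.choose j : ℝ) * p^j * (1-p)^(k-j))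
      ≤ (if (1+ε)*(p*k) < (j:ℝ) then (k.choose j : ℝ) * p^j * (1-p)^(k-j) else 0)
        + (if ((j:ℝ) < (1-ε)*(p*k)) then (k.choose j : ℝ) * p^j * (1-p)^(k-j) else 0) := by
    intro j _
    by_cases h : |(j:ℝ) - p*k| ≤ ε*(p*k)
    · simp only [h, if_true]
      have := hterm j
      split <;> split <;> linarith
    · simp only [h, if_false]
      rw [not_le] at h
      rcases lt_abs.1 h with h1 | h1
      · have h2 : (1+ε)*(p*k) < (j:ℝ) := by nlinarith
        simp only [h2, if_true]
        have := hterm j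
        split <;> linarith
      · have h2 : (j:ℝ) < (1-ε)*(p*k) := by nlinarith
        simp only [h2, if_true]
        have := hterm j
        split <;> linarith
  refine le_trans (le_trans (Finset.sum_le_sum split) (le_of_eq (Finset.sum_add_distrib))) ?_
  -- upper tail
  have hupper : ∑ j ∈ range (k+1),
      (if (1+ε)*(p*k) < (j:ℝ) then (k.choose j : ℝ) * p^j * (1-p)^(k-j) else 0)
      ≤ Real.exp (-(ε^2*p*k)/3) := by
    have hc : (0:ℝ) < Real.log (1+ε) := Real.log_pos (by linarith)
    have hbd := mgf_tail k p (Real.log (1+ε)) ((1+ε)*(p*k)) (le_of_lt hp0) hp1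
      (fun j => (1+ε)*(p*k) < (j:ℝ))
      (by intro j hj; have : (0:ℝ) ≤ (j:ℝ) - (1+ε)*(p*k) := by linarith
          positivity)
    refine le_trans hbd ?_
    rw [Real.exp_log (by linarith : (0:ℝ) < 1+ε)]
    have h1 : p * (1+ε) + (1-p) = 1 + p*ε := by ring
    rw [h1]
    have h2 : (1 + p*ε)^k ≤ Real.exp (p*ε*k) := by
      have : 1 + p*ε ≤ Real.exp (p*ε) := by
        have := Real.add_one_le_exp (p*ε); linarith
      calc (1 + p*ε)^k ≤ (Real.exp (p*ε))^k := by
            apply pow_le_pow_left₀ (by positivity) this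
        _ = Real.exp (p*ε*k) := by rw [← Real.exp_nat_mul]; ring_nf
    calc Real.exp (-(Real.log (1+ε) * ((1+ε)*(p*k)))) * (1 + p*ε)^k
        ≤ Real.exp (-(Real.log (1+ε) * ((1+ε)*(p*k)))) * Real.exp (p*ε*k) := by
          apply mul_le_mul_of_nonneg_left h2 (le_of_lt (Real.exp_pos _))
      _ = Real.exp (p*ε*k - Real.log (1+ε) * ((1+ε)*(p*k))) := by
          rw [← Real.exp_add]; ring_nf
      _ ≤ Real.exp (-(ε^2*p*k)/3) := by
          apply Real.exp_le_exp.2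
          have hlog : 2*ε/(2+ε) ≤ Real.log (1+ε) := log_ge_aux (le_of_lt hε0)
          have hkey : ε + ε^2/3 ≤ (1+ε) * Real.log (1+ε) := by
            have h3 : (1+ε) * (2*ε/(2+ε)) ≤ (1+ε) * Real.log (1+ε) := by
              apply mul_le_mul_of_nonneg_left hlog (by linarith)
            have h4 : ε + ε^2/3 ≤ (1+ε) * (2*ε/(2+ε)) := by
              rw [div_le_iff₀ (by linarith : (0:ℝ) < 2+ε)] at *
              have : (1+ε) * (2*ε/(2+ε)) = (2*ε + 2*ε^2)/(2+ε) := by field_simp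
              rw [this, le_div_iff₀ (by linarith : (0:ℝ) < 2+ε)]
              nlinarith
            linarith
          nlinarith [hpk, mul_le_mul_of_nonneg_left hkey hpk]
  -- lower tail
  have hlower : ∑ j ∈ range (k+1),
      (if ((j:ℝ) < (1-ε)*(p*k)) then (k.choose j : ℝ) * p^j * (1-p)^(k-j) else 0)
      ≤ Real.exp (-(ε^2*p*k)/3) := by
    have h1ε : (0:ℝ) < 1 - ε := by linarith
    set c := Real.log (1-ε) with hcdef
    have hc : c < 0 := Real.log_neg h1ε (by linarith)
    have hbd := mgf_tail k p c ((1-ε)*(p*k)) (le_of_lt hp0) hp1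
      (fun j => (j:ℝ) < (1-ε)*(p*k))
      (by intro j hj
          have h5 : (j:ℝ) - (1-ε)*(p*k) ≤ 0 := by linarith
          nlinarith)
    refine le_trans hbd ?_
    rw [hcdef, Real.exp_log h1ε]
    have h1 : p * (1-ε) + (1-p) = 1 - p*ε := by ring
    rw [h1]
    have hpε1 : p * ε ≤ 1 := by nlinarith
    have h2 : (1 - p*ε)^k ≤ Real.exp (-(p*ε)*k) := by
      have : 1 - p*ε ≤ Real.exp (-(p*ε)) := by
        have := Real.add_one_le_exp (-(p*ε)); linarith
      calc (1 - p*ε)^k ≤ (Real.exp (-(p*ε)))^k := by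
            apply pow_le_pow_left₀ (by linarith) this
        _ = Real.exp (-(p*ε)*k) := by rw [← Real.exp_nat_mul]; ring_nf
    calc Real.exp (-(Real.log (1-ε) * ((1-ε)*(p*k)))) * (1 - p*ε)^k
        ≤ Real.exp (-(Real.log (1-ε) * ((1-ε)*(p*k)))) * Real.exp (-(p*ε)*k) := by
          apply mul_le_mul_of_nonneg_left h2 (le_of_lt (Real.exp_pos _))
      _ = Real.exp (-(p*ε)*k - Real.log (1-ε) * ((1-ε)*(p*k))) := by
          rw [← Real.exp_add]; ring_nf
      _ ≤ Real.exp (-(ε^2*p*k)/3) := by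
          apply Real.exp_le_exp.2
          have hkey := log_lower_aux (le_of_lt hε0) hε1
          -- (1-ε) log(1-ε) + ε - ε²/2 ≥ 0
          nlinarith [hpk, mul_le_mul_of_nonneg_left hkey hpk, mul_nonneg hpk (sq_nonneg ε)]
  have h2exp : Real.exp (-(ε^2*p*k)/3) + Real.exp (-(ε^2*p*k)/3) = 2 * Real.exp (-(ε^2*p*k)/3) := by ring
  linarith [hupper, hlower]


lemma total_one {ι : Type*} [DecidableEq ι] (D : Finset ι) (p : ℝ) :
    ∑ S ∈ D.powerset, (∏ _e ∈ S, p) * (∏ _e ∈ D \ S, (1 - p)) = 1 := by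
  have := Finset.prod_add (fun _ : ι => p) (fun _ : ι => 1 - p) D
  simp only [add_sub_cancel, Finset.prod_const_one] at this
  rw [← this]

lemma marg {ι : Type*} [DecidableEq ι] (E F : Finset ι) (hFE : F ⊆ E) (p : ℝ)
    (g : ℕ → Prop) [DecidablePred g] :
    ∑ S ∈ E.powerset, (if g ((S ∩ F).card) then (∏ _e ∈ S, p) * (∏ _e ∈ E \ S, (1 - p)) else 0)
      = ∑ j ∈ Finset.range (F.card + 1),
          (if g j then (F.card.choose j : ℝ) * p ^ j * (1 - p) ^ (F.card - j) else 0) := by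
  classical
  have hbij : ∑ S ∈ E.powerset,
      (if g ((S ∩ F).card) then (∏ _e ∈ S, p) * (∏ _e ∈ E \ S, (1 - p)) else 0)
      = ∑ TU ∈ F.powerset ×ˢ (E \ F).powerset,
          (if g TU.1.card then p ^ TU.1.card * (1 - p) ^ (F.card - TU.1.card) else 0)
            * (p ^ TU.2.card * (1 - p) ^ ((E \ F).card - TU.2.card)) := by
    apply Finset.sum_nbij' (fun S => (S ∩ F, S \ F)) (fun TU => TU.1 ∪ TU.2)
    · intro S hS
      rw [Finset.mem_powerset] at hS
      rw [Finset.mem_product]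
      constructor
      · exact Finset.mem_powerset.2 (Finset.inter_subset_right)
      · exact Finset.mem_powerset.2 (fun x hx => by
          rw [Finset.mem_sdiff] at hx ⊢
          exact ⟨hS hx.1, hx.2⟩)
    · intro TU hTU
      rw [Finset.mem_product, Finset.mem_powerset, Finset.mem_powerset] at hTU
      exact Finset.mem_powerset.2 (Finset.union_subset (hTU.1.trans hFE)
        (hTU.2.trans (Finset.sdiff_subset)))
    · intro S _
      ext x
      simp only [Finset.mem_union, Finset.mem_inter, Finset.mem_sdiff]
      tauto
    · intro TU hTU
      rw [Finset.mem_product, Finset.mem_powerset, Finset.mem_powerset] at hTU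
      obtain ⟨h1, h2⟩ := hTU
      have e1 : (TU.1 ∪ TU.2) ∩ F = TU.1 := by
        ext x
        simp only [Finset.mem_inter, Finset.mem_union]
        constructor
        · rintro ⟨h | h, hxF⟩
          · exact h
          · exact absurd hxF (Finset.mem_sdiff.1 (h2 h)).2
        · intro h; exact ⟨Or.inl h, h1 h⟩
      have e2 : (TU.1 ∪ TU.2) \ F = TU.2 := by
        ext x
        simp only [Finset.mem_sdiff, Finset.mem_union]
        constructor
        · rintro ⟨h | h, hxF⟩
          · exact absurd (h1 h) hxF
          · exact h
        · intro h; exact ⟨Or.inr h, (Finset.mem_sdiff.1 (h2 h)).2⟩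
      rw [e1, e2]
    · intro S hS
      rw [Finset.mem_powerset] at hS
      have hd : Disjoint (S ∩ F) (S \ F) := by
        apply Finset.disjoint_left.2
        intro x hx1 hx2
        exact (Finset.mem_sdiff.1 hx2).2 (Finset.mem_inter.1 hx1).2
      have hScard : S.card = (S ∩ F).card + (S \ F).card := by
        rw [← Finset.card_union_of_disjoint hd]
        congr 1
        ext x
        simp only [Finset.mem_union, Finset.mem_inter, Finset.mem_sdiff]
        tauto
      have hEScard : (E \ S).card = (F.card - (S ∩ F).card) + ((E \ F).card - (S \ F).card) := by
        have h1 : (E \ S).card = E.card - S.card := Finset.card_sdiff_of_subset hS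
        have h2 : E.card = F.card + (E \ F).card := by
          rw [← Finset.card_union_of_disjoint (Finset.disjoint_sdiff)]
          congr 1
          rw [Finset.union_sdiff_of_subset hFE]
        have h3 : (S ∩ F).card ≤ F.card := Finset.card_le_card Finset.inter_subset_right
        have h4 : (S \ F).card ≤ (E \ F).card := Finset.card_le_card (fun x hx => by
          rw [Finset.mem_sdiff] at hx ⊢
          exact ⟨hS hx.1, hx.2⟩)
        omega
      simp only
      rw [Finset.prod_const, Finset.prod_const, hScard, hEScard, pow_add, pow_add]
      by_cases hg : g ((S ∩ F).card)
      · rw [if_pos hg, if_pos hg]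
        ring
      · rw [if_neg hg, if_neg hg, zero_mul]
  rw [hbij, Finset.sum_product]
  have hfact : ∀ T ∈ F.powerset,
      ∑ U ∈ (E \ F).powerset,
        (if g T.card then p ^ T.card * (1 - p) ^ (F.card - T.card) else 0)
          * (p ^ U.card * (1 - p) ^ ((E \ F).card - U.card))
      = (if g T.card then p ^ T.card * (1 - p) ^ (F.card - T.card) else 0) := by
    intro T _
    rw [← Finset.mul_sum]
    have heq : ∑ U ∈ (E \ F).powerset, p ^ U.card * (1 - p) ^ ((E \ F).card - U.card)
        = ∑ U ∈ (E \ F).powerset, (∏ _e ∈ U, p) * (∏ _e ∈ (E \ F) \ U, (1 - p)) := by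
      apply Finset.sum_congr rfl
      intro U hU
      rw [Finset.mem_powerset] at hU
      rw [Finset.prod_const, Finset.prod_const, Finset.card_sdiff_of_subset hU]
    rw [heq, total_one (E \ F) p, mul_one]
  rw [Finset.sum_congr rfl hfact]
  -- group by cardinality
  rw [Finset.sum_powerset]
  apply Finset.sum_congr rfl
  intro j hj
  rw [Finset.mem_range] at hj
  have : ∀ T ∈ F.powersetCard j,
      (if g T.card then p ^ T.card * (1 - p) ^ (F.card - T.card) else 0)
      = (if g j then p ^ j * (1 - p) ^ (F.card - j) else 0) := by
    intro T hT
    rw [(Finset.mem_powersetCard.1 hT).2]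
  rw [Finset.sum_congr rfl this, Finset.sum_const, Finset.card_powersetCard, nsmul_eq_mul]
  by_cases hg : g j
  · rw [if_pos hg, if_pos hg]; ring
  · rw [if_neg hg, if_neg hg, mul_zero]

section partition
variable {V : Type*} [Fintype V] [DecidableEq V] (G : SimpleGraph V)

def IsPartitionF (P : Finset (Finset V)) : Prop :=
  (∀ B ∈ P, B.Nonempty) ∧ (∀ v : V, ∃! B, B ∈ P ∧ v ∈ B)

def compatP (P : Finset (Finset V)) (A : Finset V) : Prop :=
  ∀ B ∈ P, B ⊆ A ∨ B ⊆ Aᶜ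

noncomputable def cutsP (P : Finset (Finset V)) (s : ℕ) : Finset (Finset V) :=
  Finset.univ.powerset.filter (fun A => compatP P A ∧ (cutEdges G A).card ≤ s)

noncomputable def interE (P : Finset (Finset V)) : Finset (Sym2 V) :=
  G.edgeFinset.filter (fun e => ¬ ∃ B ∈ P, ∀ x ∈ e, x ∈ B)

variable {G}

lemma mem_cutEdges {A : Finset V} {u v : V} (hadj : G.Adj u v) (hu : u ∈ A) (hv : v ∉ A) :
    s(u, v) ∈ cutEdges G A := by
  rw [cutEdges, Finset.mem_filter]
  refine ⟨by simp [hadj], u, hu, v, by simpa using hv, rfl⟩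

lemma mem_cutEdges_iff {A : Finset V} {e : Sym2 V} :
    e ∈ cutEdges G A ↔ e ∈ G.edgeFinset ∧ ∃ u ∈ A, ∃ v ∈ Aᶜ, e = s(u, v) := by
  unfold cutEdges
  exact Finset.mem_filter

lemma cuts_card_le_two_pow {P : Finset (Finset V)} (hP : IsPartitionF P) (s : ℕ) :
    (cutsP G P s).card ≤ 2 ^ P.card := by
  have hrec : ∀ A ∈ cutsP G P s, A = (P.filter (fun B => B ⊆ A)).biUnion id := by
    intro A hA
    rw [cutsP, Finset.mem_filter] at hA
    obtain ⟨-, hcompat, -⟩ := hA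
    ext v
    simp only [Finset.mem_biUnion, Finset.mem_filter, id]
    constructor
    · intro hv
      obtain ⟨B, ⟨hBP, hvB⟩, -⟩ := hP.2 v
      refine ⟨B, ⟨hBP, ?_⟩, hvB⟩
      rcases hcompat B hBP with h | h
      · exact h
      · exact absurd (h hvB) (by simpa using hv)
    · rintro ⟨B, ⟨-, hBA⟩, hvB⟩
      exact hBA hvB
  calc (cutsP G P s).card ≤ P.powerset.card := by
        apply Finset.card_le_card_of_injOn (fun A => P.filter (fun B => B ⊆ A))
        · intro A _; exact Finset.mem_powerset.2 (Finset.filter_subset _ _)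
        · intro A hA A' hA' h
          simp only at h
          rw [hrec A (Finset.mem_coe.1 hA), hrec A' (Finset.mem_coe.1 hA'), h]
    _ = 2 ^ P.card := Finset.card_powerset P

lemma sum_cut_blocks {P : Finset (Finset V)} (hP : IsPartitionF P) :
    ∑ B ∈ P, (cutEdges G B).card = 2 * (interE G P).card := by
  have lhs_eq : ∑ B ∈ P, (cutEdges G B).card
      = ∑ e ∈ G.edgeFinset, ∑ B ∈ P,
          (if (∃ u ∈ B, ∃ v ∈ Bᶜ, e = s(u, v)) then 1 else 0) := by
    rw [Finset.sum_comm]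
    apply Finset.sum_congr rfl
    intro B _
    rw [cutEdges, Finset.card_filter]
  rw [lhs_eq]
  have rhs_eq : 2 * (interE G P).card
      = ∑ e ∈ G.edgeFinset, (if (¬ ∃ B ∈ P, ∀ x ∈ e, x ∈ B) then 2 else 0) := by
    rw [interE, Finset.card_filter, Finset.mul_sum]
    apply Finset.sum_congr rfl
    intro e _
    split <;> simp
  rw [rhs_eq]
  apply Finset.sum_congr rfl
  intro e he
  induction e using Sym2.ind with
  | _ u v =>
    have hadj : G.Adj u v := by rwa [SimpleGraph.mem_edgeFinset, SimpleGraph.mem_edgeSet] at he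
    have hne : u ≠ v := hadj.ne
    obtain ⟨Bu, ⟨hBuP, huBu⟩, hBu_uniq⟩ := hP.2 u
    obtain ⟨Bv, ⟨hBvP, hvBv⟩, hBv_uniq⟩ := hP.2 v
    have hcond : ∀ B ∈ P, ((∃ u' ∈ B, ∃ v' ∈ Bᶜ, s(u,v) = s(u', v')) ↔
        ((u ∈ B ∧ v ∉ B) ∨ (v ∈ B ∧ u ∉ B))) := by
      intro B _
      constructor
      · rintro ⟨u', hu', v', hv', heq⟩
        simp only [Finset.mem_compl] at hv'
        rcases Sym2.eq_iff.1 heq with ⟨rfl, rfl⟩ | ⟨rfl, rfl⟩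
        · exact Or.inl ⟨hu', hv'⟩
        · exact Or.inr ⟨hu', hv'⟩
      · rintro (⟨h1, h2⟩ | ⟨h1, h2⟩)
        · exact ⟨u, h1, v, by simpa using h2, rfl⟩
        · exact ⟨v, h1, u, by simpa using h2, Sym2.eq_swap⟩
    by_cases hsame : Bu = Bv
    · -- same block: both sides 0
      have hnot : ¬ ¬ ∃ B ∈ P, ∀ x ∈ s(u,v), x ∈ B := by
        push_neg
        exact ⟨Bu, hBuP, by intro x hx; rcases Sym2.mem_iff.1 hx with rfl | rfl
                            exacts [huBu, hsame ▸ hvBv]⟩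
      rw [if_neg hnot]
      apply Finset.sum_eq_zero
      intro B hBP
      rw [if_neg]
      rw [hcond B hBP]
      push_neg
      constructor
      · intro huB
        have hEq : B = Bu := hBu_uniq B ⟨hBP, huB⟩
        rw [hEq, hsame]
        exact hvBv
      · intro hvB
        have hEq : B = Bv := hBv_uniq B ⟨hBP, hvB⟩
        rw [hEq, ← hsame]
        exact huBu
    · -- different blocks: both sides 2
      have hyes : ¬ ∃ B ∈ P, ∀ x ∈ s(u,v), x ∈ B := by
        rintro ⟨B, hBP, hall⟩
        have h1 : u ∈ B := hall u (by simp)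
        have h2 : v ∈ B := hall v (by simp)
        exact hsame ((hBu_uniq B ⟨hBP, h1⟩).symm.trans (hBv_uniq B ⟨hBP, h2⟩))
      rw [if_pos hyes]
      have hvBu : v ∉ Bu := fun hvB => hsame (hBv_uniq Bu ⟨hBuP, hvB⟩)
      have huBv : u ∉ Bv := fun huB => hsame ((hBu_uniq Bv ⟨hBvP, huB⟩).symm)
      have hsplit : ∀ B ∈ P, (if (∃ u' ∈ B, ∃ v' ∈ Bᶜ, s(u,v) = s(u', v')) then (1:ℕ) else 0)
          = (if B = Bu then 1 else 0) + (if B = Bv then 1 else 0) := by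
        intro B hBP
        by_cases h : ∃ u' ∈ B, ∃ v' ∈ Bᶜ, s(u,v) = s(u', v')
        · rw [if_pos h]
          rcases (hcond B hBP).1 h with ⟨h1, _⟩ | ⟨h1, _⟩
          · have hEq : B = Bu := hBu_uniq B ⟨hBP, h1⟩
            rw [if_pos hEq, if_neg (by rw [hEq]; exact hsame), add_zero]
          · have hEq : B = Bv := hBv_uniq B ⟨hBP, h1⟩
            rw [if_pos hEq, if_neg (by rw [hEq]; intro h2; exact hsame h2.symm), zero_add]
        · rw [if_neg h]
          have h1 : B ≠ Bu := by
            rintro rfl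
            exact h ((hcond B hBP).2 (Or.inl ⟨huBu, hvBu⟩))
          have h2 : B ≠ Bv := by
            rintro rfl
            exact h ((hcond B hBP).2 (Or.inr ⟨hvBv, huBv⟩))
          rw [if_neg h1, if_neg h2, add_zero]
      rw [Finset.sum_congr rfl hsplit, Finset.sum_add_distrib,
        Finset.sum_ite_eq' P Bu (fun _ => (1:ℕ)), Finset.sum_ite_eq' P Bv (fun _ => (1:ℕ)),
        if_pos hBuP, if_pos hBvP]

lemma cut_subset_inter {P : Finset (Finset V)} {A : Finset V} (hcompat : compatP P A) :
    cutEdges G A ⊆ interE G P := by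
  intro e he
  rw [cutEdges, Finset.mem_filter] at he
  obtain ⟨heE, u, hu, v, hv, rfl⟩ := he
  rw [interE, Finset.mem_filter]
  refine ⟨heE, ?_⟩
  rintro ⟨B, hBP, hall⟩
  have h1 : u ∈ B := hall u (by simp)
  have h2 : v ∈ B := hall v (by simp)
  rw [Finset.mem_compl] at hv
  rcases hcompat B hBP with h | h
  · exact hv (h h2)
  · exact (Finset.mem_compl.1 (h h1)) hu

lemma merge_exists {P : Finset (Finset V)} (hP : IsPartitionF P) {e : Sym2 V}
    (he : e ∈ interE G P) :
    ∃ Q : Finset (Finset V), IsPartitionF Q ∧ Q.card + 1 = P.card ∧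
      ∀ A : Finset V, compatP P A → e ∉ cutEdges G A → compatP Q A := by
  revert he
  induction e using Sym2.ind with
  | _ u v =>
  intro he
  rw [interE, Finset.mem_filter] at he
  obtain ⟨heE, hnosame⟩ := he
  have hadj : G.Adj u v := by rwa [SimpleGraph.mem_edgeFinset, SimpleGraph.mem_edgeSet] at heE
  obtain ⟨Bu, ⟨hBuP, huBu⟩, hBu_uniq⟩ := hP.2 u
  obtain ⟨Bv, ⟨hBvP, hvBv⟩, hBv_uniq⟩ := hP.2 v
  have hsame : Bu ≠ Bv := by
    rintro rfl
    exact hnosame ⟨Bu, hBuP, by intro x hx; rcases Sym2.mem_iff.1 hx with rfl | rfl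
                                exacts [huBu, hvBv]⟩
  have hvBu : v ∉ Bu := fun hvB => hsame (hBv_uniq Bu ⟨hBuP, hvB⟩)
  have huBv : u ∉ Bv := fun huB => hsame ((hBu_uniq Bv ⟨hBvP, huB⟩).symm)
  set Q : Finset (Finset V) := insert (Bu ∪ Bv) ((P.erase Bu).erase Bv) with hQdef
  have hmemQ : ∀ B : Finset V, B ∈ Q ↔ (B = Bu ∪ Bv ∨ (B ∈ P ∧ B ≠ Bu ∧ B ≠ Bv)) := by
    intro B
    simp only [hQdef, Finset.mem_insert, Finset.mem_erase]
    tauto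
  have hQpart : IsPartitionF Q := by
    constructor
    · intro B hB
      rcases (hmemQ B).1 hB with rfl | ⟨hBP, -, -⟩
      · exact ⟨u, Finset.mem_union_left _ huBu⟩
      · exact hP.1 B hBP
    · intro w
      obtain ⟨Bw, ⟨hBwP, hwBw⟩, hBw_uniq⟩ := hP.2 w
      by_cases hw : Bw = Bu ∨ Bw = Bv
      · refine ⟨Bu ∪ Bv, ⟨(hmemQ _).2 (Or.inl rfl), ?_⟩, ?_⟩
        · rcases hw with rfl | rfl
          · exact Finset.mem_union_left _ hwBw
          · exact Finset.mem_union_right _ hwBw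
        · rintro B ⟨hBQ, hwB⟩
          rcases (hmemQ B).1 hBQ with rfl | ⟨hBP, hBu, hBv⟩
          · rfl
          · exfalso
            have : B = Bw := (hBw_uniq B ⟨hBP, hwB⟩)
            rcases hw with rfl | rfl
            · exact hBu this
            · exact hBv this
      · push_neg at hw
        refine ⟨Bw, ⟨(hmemQ _).2 (Or.inr ⟨hBwP, hw.1, hw.2⟩), hwBw⟩, ?_⟩
        rintro B ⟨hBQ, hwB⟩
        rcases (hmemQ B).1 hBQ with rfl | ⟨hBP, -, -⟩
        · exfalso
          rcases Finset.mem_union.1 hwB with h | h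
          · exact hw.1 (hBw_uniq Bu ⟨hBuP, h⟩ ▸ rfl)
          · exact hw.2 (hBw_uniq Bv ⟨hBvP, h⟩ ▸ rfl)
        · exact hBw_uniq B ⟨hBP, hwB⟩
  have hcard : Q.card + 1 = P.card := by
    have hnotmem : Bu ∪ Bv ∉ (P.erase Bu).erase Bv := by
      intro hmem
      have hBP : Bu ∪ Bv ∈ P := Finset.mem_of_mem_erase (Finset.mem_of_mem_erase hmem)
      have : Bu ∪ Bv = Bu := hBu_uniq _ ⟨hBP, Finset.mem_union_left _ huBu⟩
      have hvmem : v ∈ Bu := this ▸ (Finset.mem_union_right _ hvBv)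
      exact hvBu hvmem
    rw [hQdef, Finset.card_insert_of_notMem hnotmem,
      Finset.card_erase_of_mem (Finset.mem_erase.2 ⟨hsame.symm, hBvP⟩),
      Finset.card_erase_of_mem hBuP]
    have h2 : 2 ≤ P.card := Finset.one_lt_card.2 ⟨Bu, hBuP, Bv, hBvP, hsame⟩
    omega
  refine ⟨Q, hQpart, hcard, ?_⟩
  intro A hcompat hnotcut
  have hside : (u ∈ A ∧ v ∈ A) ∨ (u ∉ A ∧ v ∉ A) := by
    by_cases hu : u ∈ A <;> by_cases hv : v ∈ A
    · exact Or.inl ⟨hu, hv⟩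
    · exact absurd (mem_cutEdges hadj hu hv) hnotcut
    · exact absurd (by rw [Sym2.eq_swap]; exact mem_cutEdges hadj.symm hv hu) hnotcut
    · exact Or.inr ⟨hu, hv⟩
  intro B hBQ
  rcases (hmemQ B).1 hBQ with rfl | ⟨hBP, -, -⟩
  · have hBuside : Bu ⊆ A ∨ Bu ⊆ Aᶜ := hcompat Bu hBuP
    have hBvside : Bv ⊆ A ∨ Bv ⊆ Aᶜ := hcompat Bv hBvP
    rcases hside with ⟨hu, hv⟩ | ⟨hu, hv⟩
    · left
      apply Finset.union_subset
      · rcases hBuside with h | h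
        · exact h
        · exact absurd (Finset.mem_compl.1 (h huBu)) (by simpa using hu)
      · rcases hBvside with h | h
        · exact h
        · exact absurd (Finset.mem_compl.1 (h hvBv)) (by simpa using hv)
    · right
      apply Finset.union_subset
      · rcases hBuside with h | h
        · exact absurd (h huBu) hu
        · exact h
      · rcases hBvside with h | h
        · exact absurd (h hvBv) hv
        · exact h
  · exact hcompat B hBP

lemma cutsP_bound (t : ℕ) (ht : 1 ≤ t)
    (hmin : ∀ A : Finset V, A.Nonempty → A ≠ Finset.univ → t ≤ (cutEdges G A).card)
    (β s : ℕ) (hβ : 1 ≤ β) (hs : s ≤ β * t) :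
    ∀ b : ℕ, ∀ P : Finset (Finset V), IsPartitionF P → P.card = b →
      (cutsP G P s).card ≤ 2 ^ (2*β) * Nat.choose (max b (2*β)) (2*β) := by
  intro b
  induction b using Nat.strong_induction_on with
  | _ b IH =>
  intro P hP hPb
  by_cases hble : b ≤ 2*β
  · rw [max_eq_right hble, Nat.choose_self, mul_one]
    calc (cutsP G P s).card ≤ 2 ^ P.card := cuts_card_le_two_pow hP s
      _ ≤ 2 ^ (2*β) := Nat.pow_le_pow_right (by norm_num) (hPb ▸ hble)
  · push_neg at hble
    have hb2 : 2 ≤ b := by omega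
    have hblock : ∀ B ∈ P, t ≤ (cutEdges G B).card := by
      intro B hBP
      apply hmin B (hP.1 B hBP)
      intro hBuniv
      obtain ⟨B', hB'P, hB'ne⟩ := Finset.exists_mem_ne (by omega : 1 < P.card) B
      obtain ⟨w, hw⟩ := hP.1 B' hB'P
      obtain ⟨Bw, -, hBw_uniq⟩ := hP.2 w
      have h1 := hBw_uniq B' ⟨hB'P, hw⟩
      have h2 := hBw_uniq B ⟨hBP, by rw [hBuniv]; exact Finset.mem_univ w⟩
      exact hB'ne (h1.trans h2.symm)
    set m := (interE G P).card with hm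
    have h2m : b * t ≤ 2 * m := by
      calc b * t = ∑ _B ∈ P, t := by rw [Finset.sum_const, hPb, smul_eq_mul]
        _ ≤ ∑ B ∈ P, (cutEdges G B).card := Finset.sum_le_sum hblock
        _ = 2 * m := sum_cut_blocks hP
    have hm1 : 1 ≤ m := by nlinarith
    have hmerge : ∀ e, e ∈ interE G P → ∃ Q : Finset (Finset V), IsPartitionF Q ∧
        Q.card + 1 = P.card ∧
        ∀ A : Finset V, compatP P A → e ∉ cutEdges G A → compatP Q A :=
      fun e he => merge_exists hP he
    choose! Q hQpart hQcard hQcompat using hmerge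
    have memcuts : ∀ A ∈ cutsP G P s,
        A ∈ Finset.univ.powerset ∧ compatP P A ∧ (cutEdges G A).card ≤ s := by
      intro A hA
      rw [cutsP, Finset.mem_filter] at hA
      exact ⟨hA.1, hA.2.1, hA.2.2⟩
    have hsub : ∀ A ∈ cutsP G P s, cutEdges G A ⊆ interE G P :=
      fun A hA => cut_subset_inter (memcuts A hA).2.1
    have stepB : ∑ A ∈ cutsP G P s, (m - (cutEdges G A).card)
        ≤ m * (2 ^ (2*β) * Nat.choose (b-1) (2*β)) := by
      have hIH : ∀ e ∈ interE G P,
          (cutsP G (Q e) s).card ≤ 2 ^ (2*β) * Nat.choose (b-1) (2*β) := by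
        intro e he
        have hcard : (Q e).card = b - 1 := by have := hQcard e he; omega
        have h := IH (b-1) (by omega) (Q e) (hQpart e he) hcard
        rwa [max_eq_left (by omega)] at h
      calc ∑ A ∈ cutsP G P s, (m - (cutEdges G A).card)
          = ∑ A ∈ cutsP G P s, ((interE G P) \ (cutEdges G A)).card := by
            apply Finset.sum_congr rfl
            intro A hA
            rw [Finset.card_sdiff_of_subset (hsub A hA)]
        _ = ∑ A ∈ cutsP G P s, ∑ e ∈ interE G P, (if e ∉ cutEdges G A then 1 else 0) := by
            apply Finset.sum_congr rfl
            intro A _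
            rw [Finset.sdiff_eq_filter, Finset.card_filter]
        _ = ∑ e ∈ interE G P, ∑ A ∈ cutsP G P s, (if e ∉ cutEdges G A then 1 else 0) :=
            Finset.sum_comm
        _ ≤ ∑ e ∈ interE G P, (cutsP G (Q e) s).card := by
            apply Finset.sum_le_sum
            intro e he
            calc ∑ A ∈ cutsP G P s, (if e ∉ cutEdges G A then 1 else 0)
                = ((cutsP G P s).filter (fun A => e ∉ cutEdges G A)).card :=
                  (Finset.card_filter _ _).symm
              _ ≤ (cutsP G (Q e) s).card := by
                  apply Finset.card_le_card
                  intro A hA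
                  rw [Finset.mem_filter] at hA
                  obtain ⟨hA1, hA2⟩ := hA
                  obtain ⟨hpow, hcompat, hcount⟩ := memcuts A hA1
                  rw [cutsP, Finset.mem_filter]
                  exact ⟨hpow, hQcompat e he A hcompat hA2, hcount⟩
        _ ≤ ∑ _e ∈ interE G P, 2 ^ (2*β) * Nat.choose (b-1) (2*β) :=
            Finset.sum_le_sum hIH
        _ = m * (2 ^ (2*β) * Nat.choose (b-1) (2*β)) := by
            rw [Finset.sum_const, smul_eq_mul]
    have stepA : ∀ A ∈ cutsP G P s,
        (b - 2*β) * m ≤ b * (m - (cutEdges G A).card) := by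
      intro A hA
      set c := (cutEdges G A).card
      have hcs : c ≤ s := (memcuts A hA).2.2
      have hcm : c ≤ m := Finset.card_le_card (hsub A hA)
      have hbc : b * c ≤ 2*β*m := by
        calc b * c ≤ b * (β * t) := Nat.mul_le_mul_left b (le_trans hcs hs)
          _ = β * (b * t) := by ring
          _ ≤ β * (2 * m) := Nat.mul_le_mul_left β h2m
          _ = 2*β*m := by ring
      calc (b - 2*β) * m = b*m - 2*β*m := Nat.sub_mul b (2*β) m
        _ ≤ b*m - b*c := Nat.sub_le_sub_left hbc (b*m)
        _ = b * (m - c) := (Nat.mul_sub b m c).symm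
    have main : m * ((b - 2*β) * (cutsP G P s).card)
        ≤ m * (b * (2 ^ (2*β) * Nat.choose (b-1) (2*β))) := by
      calc m * ((b - 2*β) * (cutsP G P s).card)
          = ∑ _A ∈ cutsP G P s, (b - 2*β) * m := by
            rw [Finset.sum_const, smul_eq_mul]; ring
        _ ≤ ∑ A ∈ cutsP G P s, b * (m - (cutEdges G A).card) := Finset.sum_le_sum stepA
        _ = b * ∑ A ∈ cutsP G P s, (m - (cutEdges G A).card) := by rw [Finset.mul_sum]
        _ ≤ b * (m * (2 ^ (2*β) * Nat.choose (b-1) (2*β))) := Nat.mul_le_mul_left b stepB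
        _ = m * (b * (2 ^ (2*β) * Nat.choose (b-1) (2*β))) := by ring
    have main2 : (b - 2*β) * (cutsP G P s).card
        ≤ b * (2 ^ (2*β) * Nat.choose (b-1) (2*β)) :=
      Nat.le_of_mul_le_mul_left main hm1
    have hid : b * Nat.choose (b-1) (2*β) = (b - 2*β) * Nat.choose b (2*β) := by
      have h1 := Nat.add_one_mul_choose_eq (b-1) (2*β)
      have hb1 : (b-1) + 1 = b := by omega
      rw [hb1] at h1
      have h2 := Nat.choose_succ_right_eq b (2*β)
      rw [h1, h2, Nat.mul_comm]
    have main3 : (b - 2*β) * (cutsP G P s).card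
        ≤ (b - 2*β) * (2 ^ (2*β) * Nat.choose b (2*β)) := by
      calc (b - 2*β) * (cutsP G P s).card
          ≤ b * (2 ^ (2*β) * Nat.choose (b-1) (2*β)) := main2
        _ = 2 ^ (2*β) * (b * Nat.choose (b-1) (2*β)) := by ring
        _ = 2 ^ (2*β) * ((b - 2*β) * Nat.choose b (2*β)) := by rw [hid]
        _ = (b - 2*β) * (2 ^ (2*β) * Nat.choose b (2*β)) := by ring
    have hbpos : 1 ≤ b - 2*β := by omega
    have := Nat.le_of_mul_le_mul_left
      (by simpa [Nat.mul_comm] using main3 : (b - 2*β) * (cutsP G P s).card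
        ≤ (b - 2*β) * (2 ^ (2*β) * Nat.choose b (2*β))) hbpos
    rwa [max_eq_left (by omega)]

lemma cut_count (t : ℕ) (ht : 1 ≤ t)
    (hmin : ∀ A : Finset V, A.Nonempty → A ≠ Finset.univ → t ≤ (cutEdges G A).card)
    (β s : ℕ) (hβ : 1 ≤ β) (hs : s ≤ β * t) (n : ℕ) (hn : Fintype.card V = n)
    (hn2 : 2 ≤ n) :
    (Finset.univ.powerset.filter (fun A : Finset V => (cutEdges G A).card ≤ s)).card
      ≤ n ^ (4*β) := by
  set P₀ : Finset (Finset V) := Finset.univ.image (fun v => ({v} : Finset V)) with hP₀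
  have hpart : IsPartitionF P₀ := by
    constructor
    · intro B hB
      rw [hP₀, Finset.mem_image] at hB
      obtain ⟨v, -, rfl⟩ := hB
      exact ⟨v, Finset.mem_singleton_self v⟩
    · intro v
      refine ⟨{v}, ⟨Finset.mem_image.2 ⟨v, Finset.mem_univ v, rfl⟩, Finset.mem_singleton_self v⟩, ?_⟩
      rintro B ⟨hBP, hvB⟩
      rw [hP₀, Finset.mem_image] at hBP
      obtain ⟨w, -, rfl⟩ := hBP
      rw [Finset.mem_singleton] at hvB
      rw [hvB]
  have hcardP₀ : P₀.card = n := by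
    rw [hP₀, Finset.card_image_of_injective _ Finset.singleton_injective, Finset.card_univ, hn]
  have hsubset : Finset.univ.powerset.filter (fun A : Finset V => (cutEdges G A).card ≤ s)
      ⊆ cutsP G P₀ s := by
    intro A hA
    rw [Finset.mem_filter] at hA
    rw [cutsP, Finset.mem_filter]
    refine ⟨hA.1, ?_, hA.2⟩
    intro B hBP
    rw [hP₀, Finset.mem_image] at hBP
    obtain ⟨w, -, rfl⟩ := hBP
    by_cases hw : w ∈ A
    · exact Or.inl (Finset.singleton_subset_iff.2 hw)
    · exact Or.inr (Finset.singleton_subset_iff.2 (Finset.mem_compl.2 hw))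
  have h1 := cutsP_bound t ht hmin β s hβ hs n P₀ hpart hcardP₀
  have h2 : 2 ^ (2*β) * Nat.choose (max n (2*β)) (2*β) ≤ n ^ (4*β) := by
    rcases le_or_gt (2*β) n with h | h
    · rw [max_eq_left h]
      calc 2 ^ (2*β) * Nat.choose n (2*β) ≤ n ^ (2*β) * n ^ (2*β) :=
            Nat.mul_le_mul (Nat.pow_le_pow_left hn2 _) (Nat.choose_le_pow n (2*β))
        _ = n ^ (4*β) := by rw [← pow_add]; congr 1; ring
    · rw [max_eq_right (le_of_lt h), Nat.choose_self, mul_one]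
      calc 2 ^ (2*β) ≤ n ^ (2*β) := Nat.pow_le_pow_left hn2 _
        _ ≤ n ^ (4*β) := Nat.pow_le_pow_right (by omega) (by omega)
  exact le_trans (le_trans (Finset.card_le_card hsubset) h1) h2

end partition

end aux
/-- If `G` is connected on `n ≥ 2` vertices with minimum cut size `t`, `t̂ ≤ t`, and `H`
keeps each edge independently with probability `p = min{200 log n/(ε² t̂), 1}`, then with
probability at least `1 − n⁻¹⁰`, simultaneously every cut of `G` of size `k` has size
within `(1 ± ε)·p·k` in `H`. -/
theorem stmt6 {V : Type*} [Fintype V] [DecidableEq V] (G : SimpleGraph V)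
    (hG : G.Connected) (n : ℕ) (hn : Fintype.card V = n) (hn2 : 2 ≤ n)
    (t that : ℕ) (hthat1 : 1 ≤ that) (hthatle : that ≤ t)
    (hmin : ∀ A : Finset V, A.Nonempty → A ≠ Finset.univ → t ≤ (cutEdges G A).card)
    (hex : ∃ A : Finset V, A.Nonempty ∧ A ≠ Finset.univ ∧ (cutEdges G A).card = t)
    (ε : ℝ) (hε0 : 0 < ε) (hε1 : ε < 1)
    (p : ℝ) (hp : p = min (200 * Real.log n / (ε ^ 2 * that)) 1) :
    (1 : ℝ) - (n : ℝ) ^ (-10 : ℤ) ≤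
      ∑ S ∈ G.edgeFinset.powerset,
        (if ∀ A : Finset V, A.Nonempty → A ≠ Finset.univ →
            |((S.filter (fun e => ∃ u ∈ A, ∃ v ∈ Aᶜ, e = s(u, v))).card : ℝ)
              - p * ((cutEdges G A).card : ℝ)| ≤ ε * (p * ((cutEdges G A).card : ℝ))
          then (∏ e ∈ S, p) * (∏ e ∈ G.edgeFinset \ S, (1 - p)) else 0) := by
  classical
  have ht1 : 1 ≤ t := le_trans hthat1 hthatle
  have hn1 : (1:ℝ) < (n:ℝ) := by exact_mod_cast hn2
  have hn0 : (0:ℝ) < (n:ℝ) := by linarith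
  have hL : 0 < Real.log n := Real.log_pos hn1
  have hthatR : (0:ℝ) < (that:ℝ) := by exact_mod_cast hthat1
  have hp1 : p ≤ 1 := by rw [hp]; exact min_le_right _ _
  have hr0 : 0 < 200 * Real.log n / (ε ^ 2 * that) := by positivity
  have hp0 : 0 < p := by rw [hp]; exact lt_min hr0 one_pos
  have hn10 : (0:ℝ) ≤ (n:ℝ) ^ (-10 : ℤ) := by positivity
  set E := G.edgeFinset with hE
  have hμ0 : ∀ S : Finset (Sym2 V), (0:ℝ) ≤ (∏ _e ∈ S, p) * (∏ _e ∈ E \ S, (1 - p)) := by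
    intro S
    apply mul_nonneg <;> apply Finset.prod_nonneg <;> intro e _
    · linarith
    · linarith
  -- it suffices to bound the bad event
  suffices hbad : ∑ S ∈ E.powerset,
      (if ¬(∀ A : Finset V, A.Nonempty → A ≠ Finset.univ →
            |((S.filter (fun e => ∃ u ∈ A, ∃ v ∈ Aᶜ, e = s(u, v))).card : ℝ)
              - p * ((cutEdges G A).card : ℝ)| ≤ ε * (p * ((cutEdges G A).card : ℝ)))
        then (∏ _e ∈ S, p) * (∏ _e ∈ E \ S, (1 - p)) else 0) ≤ (n:ℝ) ^ (-10 : ℤ) by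
    have hsplit : ∀ S ∈ E.powerset,
        (if ∀ A : Finset V, A.Nonempty → A ≠ Finset.univ →
            |((S.filter (fun e => ∃ u ∈ A, ∃ v ∈ Aᶜ, e = s(u, v))).card : ℝ)
              - p * ((cutEdges G A).card : ℝ)| ≤ ε * (p * ((cutEdges G A).card : ℝ))
          then (∏ e ∈ S, p) * (∏ e ∈ E \ S, (1 - p)) else 0)
        = (∏ _e ∈ S, p) * (∏ _e ∈ E \ S, (1 - p))
          - (if ¬(∀ A : Finset V, A.Nonempty → A ≠ Finset.univ →
            |((S.filter (fun e => ∃ u ∈ A, ∃ v ∈ Aᶜ, e = s(u, v))).card : ℝ)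
              - p * ((cutEdges G A).card : ℝ)| ≤ ε * (p * ((cutEdges G A).card : ℝ)))
            then (∏ _e ∈ S, p) * (∏ _e ∈ E \ S, (1 - p)) else 0) := by
      intro S _
      by_cases h : ∀ A : Finset V, A.Nonempty → A ≠ Finset.univ →
            |((S.filter (fun e => ∃ u ∈ A, ∃ v ∈ Aᶜ, e = s(u, v))).card : ℝ)
              - p * ((cutEdges G A).card : ℝ)| ≤ ε * (p * ((cutEdges G A).card : ℝ))
      · rw [if_pos h, if_neg (not_not.2 h), sub_zero]
      · rw [if_neg h, if_pos h, sub_self]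
    rw [Finset.sum_congr rfl hsplit, Finset.sum_sub_distrib, total_one E p]
    linarith
  rcases le_or_gt 1 (200 * Real.log n / (ε ^ 2 * that)) with hr1 | hr1
  · -- p = 1 case: only S = E has positive mass and it is good
    have hp1' : p = 1 := by rw [hp, min_eq_right hr1]
    refine le_trans (le_of_eq (Finset.sum_eq_zero ?_)) hn10
    intro S hS
    split_ifs with h
    · rfl
    · -- bad S: show the measure is 0 since S ≠ E
      have hSne : S ≠ E := by
        rintro rfl
        apply h
        intro A hA1 hA2
        have heq : E.filter (fun e => ∃ u ∈ A, ∃ v ∈ Aᶜ, e = s(u, v)) = cutEdges G A := rfl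
        rw [heq, hp1', one_mul, sub_self, abs_zero]
        positivity
      have hSsub : S ⊆ E := Finset.mem_powerset.1 hS
      have hne : (E \ S).Nonempty := by
        rw [Finset.sdiff_nonempty]
        intro hES
        exact hSne (Finset.Subset.antisymm hSsub hES)
      have hzero : (∏ _e ∈ E \ S, (1 - p)) = 0 := by
        rw [hp1', sub_self, Finset.prod_const]
        exact zero_pow (Finset.card_ne_zero.2 hne)
      rw [hzero, mul_zero]
  · -- main case: p = 200 log n / (ε² t̂) < 1
    have hp' : p = 200 * Real.log n / (ε ^ 2 * that) := by
      rw [hp, min_eq_left (le_of_lt hr1)]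
    set 𝒜 : Finset (Finset V) :=
      Finset.univ.powerset.filter (fun A : Finset V => A.Nonempty ∧ A ≠ Finset.univ) with h𝒜
    -- union bound
    have hstep1 : ∑ S ∈ E.powerset,
        (if ¬(∀ A : Finset V, A.Nonempty → A ≠ Finset.univ →
              |((S.filter (fun e => ∃ u ∈ A, ∃ v ∈ Aᶜ, e = s(u, v))).card : ℝ)
                - p * ((cutEdges G A).card : ℝ)| ≤ ε * (p * ((cutEdges G A).card : ℝ)))
          then (∏ _e ∈ S, p) * (∏ _e ∈ E \ S, (1 - p)) else 0)
        ≤ ∑ A ∈ 𝒜, ∑ S ∈ E.powerset,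
            (if ¬(|((S.filter (fun e => ∃ u ∈ A, ∃ v ∈ Aᶜ, e = s(u, v))).card : ℝ)
                - p * ((cutEdges G A).card : ℝ)| ≤ ε * (p * ((cutEdges G A).card : ℝ)))
              then (∏ _e ∈ S, p) * (∏ _e ∈ E \ S, (1 - p)) else 0) := by
      refine le_trans (Finset.sum_le_sum ?_) (le_of_eq Finset.sum_comm)
      intro S hS
      have hnn : ∀ A ∈ 𝒜, (0:ℝ) ≤
          (if ¬(|((S.filter (fun e => ∃ u ∈ A, ∃ v ∈ Aᶜ, e = s(u, v))).card : ℝ)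
              - p * ((cutEdges G A).card : ℝ)| ≤ ε * (p * ((cutEdges G A).card : ℝ)))
            then (∏ _e ∈ S, p) * (∏ _e ∈ E \ S, (1 - p)) else 0) := by
        intro A _
        split_ifs
        · exact le_refl 0
        · exact hμ0 S
      split_ifs with h
      · exact Finset.sum_nonneg hnn
      · push_neg at h
        obtain ⟨A, hA1, hA2, hA3⟩ := h
        have hmem : A ∈ 𝒜 := by
          rw [h𝒜, Finset.mem_filter]
          exact ⟨Finset.mem_powerset.2 (Finset.subset_univ A), hA1, hA2⟩
        have hval : (∏ _e ∈ S, p) * (∏ _e ∈ E \ S, (1 - p))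
            = (if ¬(|((S.filter (fun e => ∃ u ∈ A, ∃ v ∈ Aᶜ, e = s(u, v))).card : ℝ)
                - p * ((cutEdges G A).card : ℝ)| ≤ ε * (p * ((cutEdges G A).card : ℝ)))
              then (∏ _e ∈ S, p) * (∏ _e ∈ E \ S, (1 - p)) else 0) :=
          (if_pos (not_le.2 hA3)).symm
        exact le_trans (le_of_eq hval) (Finset.single_le_sum hnn hmem)
    -- per-cut Chernoff bound
    have hstep2 : ∀ A ∈ 𝒜, ∑ S ∈ E.powerset,
        (if ¬(|((S.filter (fun e => ∃ u ∈ A, ∃ v ∈ Aᶜ, e = s(u, v))).card : ℝ)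
            - p * ((cutEdges G A).card : ℝ)| ≤ ε * (p * ((cutEdges G A).card : ℝ)))
          then (∏ _e ∈ S, p) * (∏ _e ∈ E \ S, (1 - p)) else 0)
        ≤ 2 * Real.exp (-(ε^2 * p * ((cutEdges G A).card : ℝ))/3) := by
      intro A _
      have hFE : cutEdges G A ⊆ E := Finset.filter_subset _ _
      have hfil : ∀ S ∈ E.powerset,
          S.filter (fun e => ∃ u ∈ A, ∃ v ∈ Aᶜ, e = s(u, v)) = S ∩ cutEdges G A := by
        intro S hS
        have hSsub := Finset.mem_powerset.1 hS
        ext e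
        constructor
        · intro hef
          rw [Finset.mem_filter] at hef
          rw [Finset.mem_inter]
          exact ⟨hef.1, mem_cutEdges_iff.2 ⟨hSsub hef.1, hef.2⟩⟩
        · intro hei
          rw [Finset.mem_inter] at hei
          rw [Finset.mem_filter]
          exact ⟨hei.1, (mem_cutEdges_iff.1 hei.2).2⟩
      have hcongr : ∀ S ∈ E.powerset,
          (if ¬(|((S.filter (fun e => ∃ u ∈ A, ∃ v ∈ Aᶜ, e = s(u, v))).card : ℝ)
              - p * ((cutEdges G A).card : ℝ)| ≤ ε * (p * ((cutEdges G A).card : ℝ)))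
            then (∏ _e ∈ S, p) * (∏ _e ∈ E \ S, (1 - p)) else 0)
          = (if (fun j : ℕ => ¬(|(j:ℝ) - p * ((cutEdges G A).card : ℝ)|
                ≤ ε * (p * ((cutEdges G A).card : ℝ)))) ((S ∩ cutEdges G A).card)
            then (∏ _e ∈ S, p) * (∏ _e ∈ E \ S, (1 - p)) else 0) := by
        intro S hS
        apply if_congr _ rfl rfl
        rw [hfil S hS]
      rw [Finset.sum_congr rfl hcongr,
        marg E (cutEdges G A) hFE p
          (fun j : ℕ => ¬(|(j:ℝ) - p * ((cutEdges G A).card : ℝ)|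
            ≤ ε * (p * ((cutEdges G A).card : ℝ))))]
      have hconv : ∀ j ∈ Finset.range ((cutEdges G A).card + 1),
          (if ¬(|(j:ℝ) - p * ((cutEdges G A).card : ℝ)|
              ≤ ε * (p * ((cutEdges G A).card : ℝ)))
            then ((cutEdges G A).card.choose j : ℝ) * p ^ j
              * (1-p) ^ ((cutEdges G A).card - j) else 0)
          = (if |(j:ℝ) - p * ((cutEdges G A).card : ℝ)|
              ≤ ε * (p * ((cutEdges G A).card : ℝ))
            then 0 else ((cutEdges G A).card.choose j : ℝ) * p ^ j
              * (1-p) ^ ((cutEdges G A).card - j)) := by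
        intro j _
        by_cases h : |(j:ℝ) - p * ((cutEdges G A).card : ℝ)|
            ≤ ε * (p * ((cutEdges G A).card : ℝ)) <;> simp [h]
      rw [Finset.sum_congr rfl hconv]
      exact chernoff (cutEdges G A).card p ε hp0 hp1 hε0 hε1
    -- sum the per-cut bounds using the cut-counting estimate
    have hstep3 : ∑ A ∈ 𝒜, 2 * Real.exp (-(ε^2 * p * ((cutEdges G A).card : ℝ))/3)
        ≤ (n:ℝ) ^ (-10 : ℤ) := by
      have hε2 : (ε:ℝ)^2 ≠ 0 := by positivity
      have hεp : ε^2 * p = 200 * Real.log n / that := by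
        rw [hp']
        field_simp
      have hstep3a : ∀ A ∈ 𝒜, 2 * Real.exp (-(ε^2 * p * ((cutEdges G A).card : ℝ))/3)
          ≤ 2 * Real.exp (-((200/3 * Real.log n) * (((cutEdges G A).card / that : ℕ) : ℝ))) := by
        intro A _
        have hjk : ((((cutEdges G A).card / that : ℕ) : ℝ)) * (that:ℝ)
            ≤ ((cutEdges G A).card : ℝ) := by
          exact_mod_cast Nat.div_mul_le_self ((cutEdges G A).card) that
        apply mul_le_mul_of_nonneg_left _ (by norm_num : (0:ℝ) ≤ 2)
        apply Real.exp_le_exp.2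
        have h1 : ((((cutEdges G A).card / that : ℕ) : ℝ))
            ≤ ((cutEdges G A).card : ℝ) / (that : ℝ) := by
          rw [le_div_iff₀ hthatR]
          exact hjk
        have h2 : (200/3 * Real.log n) * ((((cutEdges G A).card / that : ℕ) : ℝ))
            ≤ (200/3 * Real.log n) * (((cutEdges G A).card : ℝ) / (that : ℝ)) :=
          mul_le_mul_of_nonneg_left h1 (by positivity)
        have h3 : (200/3 * Real.log n) * (((cutEdges G A).card : ℝ) / (that : ℝ))
            = (ε^2 * p * ((cutEdges G A).card : ℝ))/3 := by
          rw [hεp]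
          ring
        linarith
      have hmapsto : ∀ A ∈ 𝒜, (cutEdges G A).card / that ∈ Finset.Icc 1 (n^2) := by
        intro A hA
        rw [h𝒜, Finset.mem_filter] at hA
        have hkt : t ≤ (cutEdges G A).card := hmin A hA.2.1 hA.2.2
        rw [Finset.mem_Icc]
        constructor
        · rw [Nat.one_le_div_iff (by omega : 0 < that)]
          omega
        · calc (cutEdges G A).card / that ≤ (cutEdges G A).card := Nat.div_le_self _ _
            _ ≤ E.card := Finset.card_le_card (Finset.filter_subset _ _)
            _ ≤ (Fintype.card V).choose 2 := by
              rw [hE]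
              exact SimpleGraph.card_edgeFinset_le_card_choose_two
            _ ≤ n^2 := by rw [hn]; exact Nat.choose_le_pow n 2
      have hinner : ∀ j ∈ Finset.Icc 1 (n^2),
          ∑ A ∈ 𝒜.filter (fun A => (cutEdges G A).card / that = j),
            2 * Real.exp (-((200/3 * Real.log n) * (((cutEdges G A).card / that : ℕ) : ℝ)))
          ≤ ((n:ℝ) ^ (4*(j+1)) * (2 * Real.exp (-((200/3 * Real.log n) * (j:ℝ))))) := by
        intro j hj
        have hcongrj : ∀ A ∈ 𝒜.filter (fun A => (cutEdges G A).card / that = j),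
            2 * Real.exp (-((200/3 * Real.log n) * (((cutEdges G A).card / that : ℕ) : ℝ)))
            = 2 * Real.exp (-((200/3 * Real.log n) * (j:ℝ))) := by
          intro A hA
          rw [(Finset.mem_filter.1 hA).2]
        rw [Finset.sum_congr rfl hcongrj, Finset.sum_const, nsmul_eq_mul]
        apply mul_le_mul_of_nonneg_right _ (by positivity)
        -- cardinality of the fiber
        have hsubJ : 𝒜.filter (fun A => (cutEdges G A).card / that = j)
            ⊆ Finset.univ.powerset.filter
                (fun A : Finset V => (cutEdges G A).card ≤ (j+1)*t) := by
          intro A hA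
          rw [Finset.mem_filter] at hA
          obtain ⟨hA𝒜, hAj⟩ := hA
          rw [h𝒜, Finset.mem_filter] at hA𝒜
          rw [Finset.mem_filter]
          refine ⟨hA𝒜.1, ?_⟩
          have hlt : (cutEdges G A).card < (j+1) * that := by
            rw [← Nat.div_lt_iff_lt_mul (by omega : 0 < that), hAj]
            omega
          calc (cutEdges G A).card ≤ (j+1) * that := le_of_lt hlt
            _ ≤ (j+1) * t := Nat.mul_le_mul_left _ hthatle
        have hcount := cut_count (G := G) t ht1 hmin (j+1) ((j+1)*t)
          (by omega) le_rfl n hn hn2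
        have hcard : (𝒜.filter (fun A => (cutEdges G A).card / that = j)).card
            ≤ n ^ (4*(j+1)) := le_trans (Finset.card_le_card hsubJ) hcount
        exact_mod_cast hcard
      have hperj : ∀ j ∈ Finset.Icc 1 (n^2),
          ((n:ℝ) ^ (4*(j+1)) * (2 * Real.exp (-((200/3 * Real.log n) * (j:ℝ)))))
          ≤ 2 * Real.exp (-(50 * Real.log n)) := by
        intro j hj
        have hj1 : 1 ≤ j := (Finset.mem_Icc.1 hj).1
        have hj1R : (1:ℝ) ≤ (j:ℝ) := by exact_mod_cast hj1
        have hpow : (n:ℝ) ^ (4*(j+1)) = Real.exp (((4*(j+1) : ℕ) : ℝ) * Real.log n) := by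
          rw [Real.exp_nat_mul, Real.exp_log hn0]
        rw [hpow]
        have hcomb : Real.exp (((4*(j+1) : ℕ) : ℝ) * Real.log n)
            * (2 * Real.exp (-((200/3 * Real.log n) * (j:ℝ))))
            = 2 * Real.exp (((4*(j+1) : ℕ) : ℝ) * Real.log n
                + -((200/3 * Real.log n) * (j:ℝ))) := by
          rw [Real.exp_add]
          ring
        rw [hcomb]
        apply mul_le_mul_of_nonneg_left _ (by norm_num : (0:ℝ) ≤ 2)
        apply Real.exp_le_exp.2
        have hcast : ((4*(j+1) : ℕ) : ℝ) = 4*(j:ℝ) + 4 := by push_cast; ring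
        rw [hcast]
        nlinarith [hL, hj1R, mul_nonneg (le_of_lt hL) (sub_nonneg.2 hj1R)]
      have hfib := Finset.sum_fiberwise_of_maps_to hmapsto
        (fun A => 2 * Real.exp (-((200/3 * Real.log n) * (((cutEdges G A).card / that : ℕ) : ℝ))))
      calc ∑ A ∈ 𝒜, 2 * Real.exp (-(ε^2 * p * ((cutEdges G A).card : ℝ))/3)
          ≤ ∑ A ∈ 𝒜, 2 * Real.exp (-((200/3 * Real.log n)
              * (((cutEdges G A).card / that : ℕ) : ℝ))) := Finset.sum_le_sum hstep3a
        _ = ∑ j ∈ Finset.Icc 1 (n^2), ∑ A ∈ 𝒜.filter (fun A => (cutEdges G A).card / that = j),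
              2 * Real.exp (-((200/3 * Real.log n) * (((cutEdges G A).card / that : ℕ) : ℝ))) :=
            hfib.symm
        _ ≤ ∑ j ∈ Finset.Icc 1 (n^2),
              ((n:ℝ) ^ (4*(j+1)) * (2 * Real.exp (-((200/3 * Real.log n) * (j:ℝ))))) :=
            Finset.sum_le_sum hinner
        _ ≤ ∑ _j ∈ Finset.Icc 1 (n^2), 2 * Real.exp (-(50 * Real.log n)) :=
            Finset.sum_le_sum hperj
        _ = (n^2 : ℕ) * (2 * Real.exp (-(50 * Real.log n))) := by
            rw [Finset.sum_const, nsmul_eq_mul, Nat.card_Icc]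
            norm_num
        _ ≤ (n:ℝ) ^ (-10 : ℤ) := by
            have hexp50 : Real.exp (-(50 * Real.log n)) = ((n:ℝ)^(50:ℕ))⁻¹ := by
              rw [Real.exp_neg]
              congr 1
              rw [show (50 : ℝ) * Real.log n = ((50:ℕ):ℝ) * Real.log n by norm_num,
                Real.exp_nat_mul, Real.exp_log hn0]
            have hzpow : (n:ℝ) ^ (-10 : ℤ) = ((n:ℝ)^(10:ℕ))⁻¹ := by
              rw [zpow_neg]
              norm_cast
            rw [hexp50, hzpow]
            have hnR : (2:ℝ) ≤ (n:ℝ) := by exact_mod_cast hn2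
            have h38 : (2:ℝ) ≤ (n:ℝ)^(38:ℕ) := by
              calc (2:ℝ) ≤ (2:ℝ)^(38:ℕ) := by norm_num
                _ ≤ (n:ℝ)^(38:ℕ) := pow_le_pow_left₀ (by norm_num) hnR _
            have hcast2 : ((n^2 : ℕ) : ℝ) = (n:ℝ)^(2:ℕ) := by push_cast; ring
            rw [hcast2]
            have hpos50 : (0:ℝ) < (n:ℝ)^(50:ℕ) := by positivity
            have hpos10 : (0:ℝ) < (n:ℝ)^(10:ℕ) := by positivity
            have h1 : (n:ℝ)^(2:ℕ) * (2 * ((n:ℝ)^(50:ℕ))⁻¹) = 2 * (n:ℝ)^(2:ℕ) / (n:ℝ)^(50:ℕ) := by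
              ring
            rw [h1, div_le_iff₀ hpos50]
            have h2 : ((n:ℝ)^(10:ℕ))⁻¹ * (n:ℝ)^(50:ℕ) = (n:ℝ)^(40:ℕ) := by
              rw [show ((n:ℝ)^(50:ℕ)) = (n:ℝ)^(10:ℕ) * (n:ℝ)^(40:ℕ) by rw [← pow_add],
                inv_mul_cancel_left₀ (ne_of_gt hpos10)]
            rw [h2]
            calc 2 * (n:ℝ)^(2:ℕ) ≤ (n:ℝ)^(38:ℕ) * (n:ℝ)^(2:ℕ) :=
                  mul_le_mul_of_nonneg_right h38 (by positivity)
              _ = (n:ℝ)^(40:ℕ) := by rw [← pow_add]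
    exact le_trans hstep1 (le_trans (Finset.sum_le_sum hstep2) hstep3)
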